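/- Let K ≥ 7 be an integer, L > 0, 0 < α ≤ 1/(4L), and C_f, M₁, M_f ≥ 0. Let e_0, ..., e_{K−1} ≥ 0 and β_0, ..., β_{K−1} ≥ 0 satisfy β_k ≤ M₁/(k+1) for all k and Σ_{k=0}^{K−1} (α/2 − Lα²) e_k ≤ Σ_{k=0}^{K−1} ( α C_f √(β_k) + L α² β_k ) + M_f. Then (1/K) Σ_{k=0}^{K−1} e_k ≤ 8 C_f √(M₁) · K^{−1/2} + 4 L α M₁ · K^{−1/2} + 4 M_f/(α K). -/

import Mathlib

lemma sum_inv_sqrt_le (K : ℕ) :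
    ∑ k ∈ Finset.range K, 1 / Real.sqrt ((k : ℝ) + 1) ≤ 2 * Real.sqrt K := by
  induction K with
  | zero => simp
  | succ n ih =>
    rw [Finset.sum_range_succ]
    have h1 : (0:ℝ) < Real.sqrt ((n:ℝ) + 1) := Real.sqrt_pos.mpr (by positivity)
    have key : 1 / Real.sqrt ((n:ℝ) + 1) ≤ 2 * (Real.sqrt ((n:ℝ)+1) - Real.sqrt n) := by
      have hs : Real.sqrt (n:ℝ) ≤ Real.sqrt ((n:ℝ)+1) := Real.sqrt_le_sqrt (by linarith)
      have hmul : (Real.sqrt ((n:ℝ)+1) - Real.sqrt n) * (Real.sqrt ((n:ℝ)+1) + Real.sqrt n)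
          = 1 := by
        have e1 : Real.sqrt ((n:ℝ)+1) ^ 2 = (n:ℝ)+1 := Real.sq_sqrt (by positivity)
        have e2 : Real.sqrt (n:ℝ) ^ 2 = (n:ℝ) := Real.sq_sqrt (by positivity)
        rw [mul_comm, ← sq_sub_sq, e1, e2]; ring
      have hsumpos : 0 < Real.sqrt ((n:ℝ)+1) + Real.sqrt n := by
        have := Real.sqrt_nonneg (n:ℝ); linarith
      rw [div_le_iff₀ h1]
      have hle : Real.sqrt ((n:ℝ)+1) + Real.sqrt n ≤ 2 * Real.sqrt ((n:ℝ)+1) := by linarith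
      nlinarith [hmul, hle, h1.le, Real.sqrt_nonneg (n:ℝ)]
    push_cast
    linarith [ih]

lemma sum_harmonic_le (K : ℕ) (hK : 7 ≤ K) :
    ∑ k ∈ Finset.range K, 1 / ((k : ℝ) + 1) ≤ Real.sqrt K := by
  induction K with
  | zero => omega
  | succ n ih =>
    rcases Nat.lt_or_ge n 7 with h7 | h7
    · -- n+1 = 7, i.e. n = 6
      have hn : n = 6 := by omega
      subst hn
      have : ∑ k ∈ Finset.range 7, 1 / ((k : ℝ) + 1) = 363/140 := by
        norm_num [Finset.sum_range_succ]
      rw [this]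
      have : (363/140 : ℝ) = Real.sqrt ((363/140)^2) := by
        rw [Real.sqrt_sq]; norm_num
      rw [this]
      apply Real.sqrt_le_sqrt
      push_cast; norm_num
    · rw [Finset.sum_range_succ]
      have ih' := ih h7
      have h1 : (0:ℝ) < (n:ℝ) + 1 := by positivity
      have key : 1 / ((n:ℝ) + 1) ≤ Real.sqrt ((n:ℝ)+1) - Real.sqrt n := by
        have hs2 : (2:ℝ) ≤ Real.sqrt ((n:ℝ)+1) := by
          have : Real.sqrt 4 ≤ Real.sqrt ((n:ℝ)+1) := by
            apply Real.sqrt_le_sqrt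
            have : (7:ℝ) ≤ n := by exact_mod_cast h7
            linarith
          rwa [show (4:ℝ) = 2^2 by norm_num, Real.sqrt_sq (by norm_num)] at this
        have hs : Real.sqrt (n:ℝ) ≤ Real.sqrt ((n:ℝ)+1) := Real.sqrt_le_sqrt (by linarith)
        have hmul : (Real.sqrt ((n:ℝ)+1) - Real.sqrt n) * (Real.sqrt ((n:ℝ)+1) + Real.sqrt n)
            = 1 := by
          have e1 : Real.sqrt ((n:ℝ)+1) ^ 2 = (n:ℝ)+1 := Real.sq_sqrt (by positivity)
          have e2 : Real.sqrt (n:ℝ) ^ 2 = (n:ℝ) := Real.sq_sqrt (by positivity)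
          rw [mul_comm, ← sq_sub_sq, e1, e2]; ring
        rw [div_le_iff₀ h1]
        -- need (√(n+1)-√n)*(n+1) ≥ 1, since √(n+1)+√n ≤ n+1
        have hle : Real.sqrt ((n:ℝ)+1) + Real.sqrt n ≤ (n:ℝ)+1 := by
          have e1 : Real.sqrt ((n:ℝ)+1) ^ 2 = (n:ℝ)+1 := Real.sq_sqrt (by positivity)
          nlinarith [hs, hs2]
        nlinarith [hmul, hle, Real.sqrt_nonneg (n:ℝ), hs]
      push_cast
      linarith

/-- Deterministic form of Corollary 4.1(b): with fixed outer step `α ≤ 1/(4L)` and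
per-iteration inner error bounds `β k ≤ M₁/(k+1)` (from `S = (k+1)²` inner steps),
for `K ≥ 7` one has
`(1/K) Σ e_k ≤ 8 C_f √M₁ / √K + 4 L α M₁ / √K + 4 M_f/(α K)`. -/
theorem msmd_rate_varying_inner_count_fixed_outer
    (K : ℕ) (hK : 7 ≤ K)
    (L α Cf M₁ Mf : ℝ)
    (hL : 0 < L) (hα0 : 0 < α) (hα : α ≤ 1 / (4 * L))
    (hCf : 0 ≤ Cf) (hM₁ : 0 ≤ M₁) (hMf : 0 ≤ Mf)
    (e β : ℕ → ℝ)
    (he : ∀ k < K, 0 ≤ e k) (hβ0 : ∀ k < K, 0 ≤ β k)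
    (hβ : ∀ k < K, β k ≤ M₁ / (k + 1))
    (hsum : ∑ k ∈ Finset.range K, (α / 2 - L * α ^ 2) * e k ≤
      (∑ k ∈ Finset.range K, (α * Cf * Real.sqrt (β k) + L * α ^ 2 * β k)) + Mf) :
    (1 / K) * ∑ k ∈ Finset.range K, e k ≤
      8 * Cf * Real.sqrt M₁ / Real.sqrt K + 4 * L * α * M₁ / Real.sqrt K
        + 4 * Mf / (α * K) := by
  have hK0 : (0:ℝ) < K := by positivity
  have hK0' : 0 < K := by omega
  have hsK : (0:ℝ) < Real.sqrt K := Real.sqrt_pos.mpr hK0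
  have hsq : Real.sqrt K * Real.sqrt K = (K:ℝ) := Real.mul_self_sqrt hK0.le
  have hLα : L * α ≤ 1/4 := by
    rw [le_div_iff₀ (by positivity : (0:ℝ) < 4*L)] at hα
    nlinarith
  have hcoef : α/4 ≤ α/2 - L * α^2 := by nlinarith
  -- Step 1: lower bound the LHS sum
  have h1 : (α/4) * ∑ k ∈ Finset.range K, e k ≤
      ∑ k ∈ Finset.range K, (α / 2 - L * α ^ 2) * e k := by
    rw [Finset.mul_sum]
    apply Finset.sum_le_sum
    intro k hk
    exact mul_le_mul_of_nonneg_right hcoef (he k (Finset.mem_range.mp hk))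
  -- Step 2: upper bound the RHS sum
  have h2 : ∑ k ∈ Finset.range K, (α * Cf * Real.sqrt (β k) + L * α ^ 2 * β k) ≤
      α * Cf * Real.sqrt M₁ * (2 * Real.sqrt K) + L * α ^ 2 * M₁ * Real.sqrt K := by
    have hb : ∑ k ∈ Finset.range K, (α * Cf * Real.sqrt (β k) + L * α ^ 2 * β k) ≤
        ∑ k ∈ Finset.range K, (α * Cf * (Real.sqrt M₁ * (1 / Real.sqrt ((k:ℝ)+1)))
          + L * α ^ 2 * (M₁ * (1 / ((k:ℝ)+1)))) := by
      apply Finset.sum_le_sum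
      intro k hk
      have hk' := Finset.mem_range.mp hk
      have hβk := hβ k hk'
      have hsb : Real.sqrt (β k) ≤ Real.sqrt M₁ * (1 / Real.sqrt ((k:ℝ)+1)) := by
        have : Real.sqrt (β k) ≤ Real.sqrt (M₁ / ((k:ℝ)+1)) := by
          apply Real.sqrt_le_sqrt
          exact_mod_cast hβk
        rw [Real.sqrt_div hM₁] at this
        rw [mul_one_div]
        exact_mod_cast this
      have hbb : β k ≤ M₁ * (1 / ((k:ℝ)+1)) := by
        rw [mul_one_div]; exact_mod_cast hβk
      have t1 : α * Cf * Real.sqrt (β k) ≤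
          α * Cf * (Real.sqrt M₁ * (1 / Real.sqrt ((k:ℝ)+1))) :=
        mul_le_mul_of_nonneg_left hsb (by positivity)
      have t2 : L * α ^ 2 * β k ≤ L * α ^ 2 * (M₁ * (1 / ((k:ℝ)+1))) :=
        mul_le_mul_of_nonneg_left hbb (by positivity)
      linarith
    have hsplit : ∑ k ∈ Finset.range K, (α * Cf * (Real.sqrt M₁ * (1 / Real.sqrt ((k:ℝ)+1)))
          + L * α ^ 2 * (M₁ * (1 / ((k:ℝ)+1))))
        = α * Cf * Real.sqrt M₁ * ∑ k ∈ Finset.range K, 1 / Real.sqrt ((k:ℝ)+1)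
          + L * α ^ 2 * M₁ * ∑ k ∈ Finset.range K, 1 / ((k:ℝ)+1) := by
      rw [Finset.sum_add_distrib, Finset.mul_sum, Finset.mul_sum]
      congr 1 <;> (apply Finset.sum_congr rfl; intro k _; ring)
    have hS1 := sum_inv_sqrt_le K
    have hS2 := sum_harmonic_le K hK
    have c1 : 0 ≤ α * Cf * Real.sqrt M₁ := by positivity
    have c2 : 0 ≤ L * α ^ 2 * M₁ := by positivity
    calc ∑ k ∈ Finset.range K, (α * Cf * Real.sqrt (β k) + L * α ^ 2 * β k)
        ≤ α * Cf * Real.sqrt M₁ * ∑ k ∈ Finset.range K, 1 / Real.sqrt ((k:ℝ)+1)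
          + L * α ^ 2 * M₁ * ∑ k ∈ Finset.range K, 1 / ((k:ℝ)+1) := by
          rw [← hsplit]; exact hb
      _ ≤ α * Cf * Real.sqrt M₁ * (2 * Real.sqrt K) + L * α ^ 2 * M₁ * Real.sqrt K := by
          have := mul_le_mul_of_nonneg_left hS1 c1
          have := mul_le_mul_of_nonneg_left hS2 c2
          linarith
  -- Combine
  have h3 : (α/4) * ∑ k ∈ Finset.range K, e k ≤
      α * Cf * Real.sqrt M₁ * (2 * Real.sqrt K) + L * α ^ 2 * M₁ * Real.sqrt K + Mf := by
    linarith
  have h4 : ∑ k ∈ Finset.range K, e k ≤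
      8 * Cf * Real.sqrt M₁ * Real.sqrt K + 4 * L * α * M₁ * Real.sqrt K + 4 * Mf / α := by
    have hX : (α/4) * (8 * Cf * Real.sqrt M₁ * Real.sqrt K + 4 * L * α * M₁ * Real.sqrt K
        + 4 * Mf / α) = α * Cf * Real.sqrt M₁ * (2 * Real.sqrt K) + L * α ^ 2 * M₁ * Real.sqrt K
        + Mf := by
      field_simp; ring
    have h5 : (α/4) * ∑ k ∈ Finset.range K, e k ≤ (α/4) * (8 * Cf * Real.sqrt M₁ * Real.sqrt K
        + 4 * L * α * M₁ * Real.sqrt K + 4 * Mf / α) := by rw [hX]; exact h3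
    exact (mul_le_mul_iff_right₀ (by positivity)).mp h5
  calc (1 / (K:ℝ)) * ∑ k ∈ Finset.range K, e k
      ≤ (1 / (K:ℝ)) * (8 * Cf * Real.sqrt M₁ * Real.sqrt K
          + 4 * L * α * M₁ * Real.sqrt K + 4 * Mf / α) :=
        mul_le_mul_of_nonneg_left h4 (by positivity)
    _ = 8 * Cf * Real.sqrt M₁ / Real.sqrt K + 4 * L * α * M₁ / Real.sqrt K
        + 4 * Mf / (α * K) := by
        field_simp
        linear_combination (8 * Cf * Real.sqrt M₁ * α + 4 * L * α^2 * M₁) * hsq
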